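/- Let n ≥ 1 and let w ∈ W. Then the set ξ(w) = σ_l(η_w⁻¹(Φ_w ∩ Φ⁺¹)) belongs to Υ; that is, the image of Φ_w ∩ Φ⁺¹ under the permutation σ_l ∘ η_w⁻¹ (acting on ℤⁿ by permuting basis vectors) satisfies (ξ(w) + Φ⁺) ∩ Φ⁺ ⊆ ξ(w) and (ξ(w) + ξ(w)) ∩ Φ⁺ = ∅. -/

import Mathlib

open Pointwise

/-- The `i`-th standard basis vector of `ℤⁿ`. -/
def stdBasis (n : ℕ) (i : Fin n) : Fin n → ℤ := Pi.single i 1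

/-- The positive roots of type `Cₙ`: `eᵢ - eⱼ` for `i < j` and `eᵢ + eⱼ` for `i ≤ j`. -/
def PhiPos (n : ℕ) : Set (Fin n → ℤ) :=
  {v | ∃ i j : Fin n, i < j ∧ v = stdBasis n i - stdBasis n j} ∪
  {v | ∃ i j : Fin n, i ≤ j ∧ v = stdBasis n i + stdBasis n j}

/-- Membership in the hyperoctahedral group `W`: a linear automorphism of `ℤⁿ` sending each
standard basis vector to `±` a standard basis vector. -/
def IsSigned {n : ℕ} (w : (Fin n → ℤ) ≃ₗ[ℤ] (Fin n → ℤ)) : Prop :=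
  ∀ j : Fin n, ∃ i : Fin n,
    w (stdBasis n j) = stdBasis n i ∨ w (stdBasis n j) = - stdBasis n i

/-- `Φ_w = w(−Φ⁺) ∩ Φ⁺`. -/
def PhiW {n : ℕ} (w : (Fin n → ℤ) ≃ₗ[ℤ] (Fin n → ℤ)) : Set (Fin n → ℤ) :=
  (⇑w '' (-(PhiPos n))) ∩ PhiPos n

/-- The permutation `σ` acting linearly on `ℤⁿ` by `eⱼ ↦ e_{σ(j)}`. -/
def permL {n : ℕ} (σ : Equiv.Perm (Fin n)) : (Fin n → ℤ) ≃ₗ[ℤ] (Fin n → ℤ) where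
  toFun v := fun i => v (σ.symm i)
  invFun v := fun i => v (σ i)
  map_add' _ _ := rfl
  map_smul' _ _ := rfl
  left_inv v := by funext i; simp
  right_inv v := by funext i; simp


/-- `Φ⁺⁰`: the roots `eᵢ - eⱼ` for `i < j`. -/
def Phi0 (n : ℕ) : Set (Fin n → ℤ) :=
  {v | ∃ i j : Fin n, i < j ∧ v = stdBasis n i - stdBasis n j}

/-- `Φ⁺¹`: the roots `eᵢ + eⱼ` for `i ≤ j`. -/
def Phi1 (n : ℕ) : Set (Fin n → ℤ) :=
  {v | ∃ i j : Fin n, i ≤ j ∧ v = stdBasis n i + stdBasis n j}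

/-- The collection `Υ` of combinatorial abelian ideals. -/
def Upsilon (n : ℕ) : Set (Set (Fin n → ℤ)) :=
  {Ψ | Ψ ⊆ PhiPos n ∧ (Ψ + PhiPos n) ∩ PhiPos n ⊆ Ψ ∧ (Ψ + Ψ) ∩ PhiPos n = ∅}

section Aux
variable {n : ℕ}

lemma stdBasis_apply_self (i : Fin n) : stdBasis n i i = 1 := by simp [stdBasis]

lemma stdBasis_apply_ne {i k : Fin n} (h : k ≠ i) : stdBasis n i k = 0 := by
  simp [stdBasis, Pi.single_eq_of_ne h]

lemma stdBasis_nonneg (i k : Fin n) : 0 ≤ stdBasis n i k := by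
  unfold stdBasis
  rw [Pi.single_apply]
  split <;> norm_num

lemma std_eq_iff {a b : Fin n} (h : stdBasis n a = stdBasis n b) : a = b := by
  by_contra hne
  have h1 := congrFun h a
  rw [stdBasis_apply_self, stdBasis_apply_ne hne] at h1
  exact one_ne_zero h1

lemma std_ne_neg (a b : Fin n) : stdBasis n a ≠ -stdBasis n b := by
  intro h
  have h1 := congrFun h a
  rw [stdBasis_apply_self, Pi.neg_apply] at h1
  have h2 := stdBasis_nonneg b a
  linarith

/-- first nonzero coordinate positive -/
def FNZ (v : Fin n → ℤ) : Prop := ∃ i, 0 < v i ∧ ∀ k, k < i → v k = 0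

lemma fnz_of_mem {v : Fin n → ℤ} (hv : v ∈ PhiPos n) : FNZ v := by
  rcases hv with ⟨i, j, hij, rfl⟩ | ⟨i, j, hij, rfl⟩
  · refine ⟨i, ?_, fun k hk => ?_⟩
    · rw [Pi.sub_apply, stdBasis_apply_self, stdBasis_apply_ne hij.ne]; norm_num
    · rw [Pi.sub_apply, stdBasis_apply_ne hk.ne, stdBasis_apply_ne (hk.trans_le hij.le).ne,
        sub_zero]
  · refine ⟨i, ?_, fun k hk => ?_⟩
    · rw [Pi.add_apply, stdBasis_apply_self]
      have := stdBasis_nonneg j i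
      linarith
    · rw [Pi.add_apply, stdBasis_apply_ne hk.ne, stdBasis_apply_ne (hk.trans_le hij).ne,
        add_zero]

lemma fnz_add {u v : Fin n → ℤ} (hu : FNZ u) (hv : FNZ v) : FNZ (u + v) := by
  obtain ⟨i, hi, hi'⟩ := hu
  obtain ⟨j, hj, hj'⟩ := hv
  rcases lt_trichotomy i j with h | rfl | h
  · refine ⟨i, ?_, fun k hk => ?_⟩
    · rw [Pi.add_apply, hj' i h]; linarith
    · rw [Pi.add_apply, hi' k hk, hj' k (hk.trans h), add_zero]
  · refine ⟨i, ?_, fun k hk => ?_⟩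
    · rw [Pi.add_apply]; linarith
    · rw [Pi.add_apply, hi' k hk, hj' k hk, add_zero]
  · refine ⟨j, ?_, fun k hk => ?_⟩
    · rw [Pi.add_apply, hi' j h]; linarith
    · rw [Pi.add_apply, hi' k (hk.trans h), hj' k hk, add_zero]

lemma fnz_neg_false {v : Fin n → ℤ} (h1 : FNZ v) (h2 : FNZ (-v)) : False := by
  obtain ⟨i, hi, hi'⟩ := h1
  obtain ⟨j, hj, hj'⟩ := h2
  rw [Pi.neg_apply] at hj
  rcases lt_trichotomy i j with h | rfl | h
  · have := hj' i h; rw [Pi.neg_apply] at this; linarith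
  · linarith
  · have := hi' j h; linarith

lemma not_mem_neg {v : Fin n → ℤ} (hv : v ∈ PhiPos n) (hv' : v ∈ -(PhiPos n)) : False :=
  fnz_neg_false (fnz_of_mem hv) (fnz_of_mem (Set.mem_neg.mp hv'))

lemma add_mem_phi1 (a b : Fin n) : stdBasis n a + stdBasis n b ∈ Phi1 n := by
  rcases le_total a b with h | h
  · exact ⟨a, b, h, rfl⟩
  · exact ⟨b, a, h, by rw [add_comm]⟩

lemma phi1_subset : Phi1 n ⊆ PhiPos n := fun v hv => Or.inr hv

lemma add_mem_pos (a b : Fin n) : stdBasis n a + stdBasis n b ∈ PhiPos n :=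
  phi1_subset (add_mem_phi1 a b)

lemma sub_mem_neg {a b : Fin n} (h : b < a) :
    stdBasis n a - stdBasis n b ∈ -(PhiPos n) := by
  rw [Set.mem_neg, neg_sub]
  exact Or.inl ⟨b, a, h, rfl⟩

lemma neg_add_mem (a b : Fin n) : -stdBasis n a - stdBasis n b ∈ -(PhiPos n) := by
  rw [Set.mem_neg]
  have : -(-stdBasis n a - stdBasis n b) = stdBasis n a + stdBasis n b := by ring
  rw [this]
  exact add_mem_pos a b

lemma sub_mem_cases {a b : Fin n} (h : a ≠ b) :
    stdBasis n a - stdBasis n b ∈ PhiPos n ∪ -(PhiPos n) := by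
  rcases h.lt_or_gt with h | h
  · exact Or.inl (Or.inl ⟨a, b, h, rfl⟩)
  · exact Or.inr (sub_mem_neg h)

lemma signed_ne {w : (Fin n → ℤ) ≃ₗ[ℤ] (Fin n → ℤ)} {i j a b : Fin n}
    (ha : w (stdBasis n i) = stdBasis n a ∨ w (stdBasis n i) = -stdBasis n a)
    (hb : w (stdBasis n j) = stdBasis n b ∨ w (stdBasis n j) = -stdBasis n b)
    (hab : a = b) : i = j := by
  subst hab
  have key : stdBasis n i = stdBasis n j ∨ stdBasis n i = -(stdBasis n j) := by
    rcases ha with ha | ha <;> rcases hb with hb | hb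
    · left; apply w.injective; rw [ha, hb]
    · right; apply w.injective; rw [map_neg, ha, hb, neg_neg]
    · right; apply w.injective; rw [map_neg, ha, hb]
    · left; apply w.injective; rw [ha, hb]
  rcases key with key | key
  · exact std_eq_iff key
  · exact absurd key (std_ne_neg i j)

lemma signed_symm {w : (Fin n → ℤ) ≃ₗ[ℤ] (Fin n → ℤ)} (hw : IsSigned w) :
    IsSigned w.symm := by
  choose f hf using hw
  have hinj : Function.Injective f := fun a b hab => signed_ne (hf a) (hf b) hab
  have hsurj : Function.Surjective f := Finite.surjective_of_injective hinj
  intro i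
  obtain ⟨j, rfl⟩ := hsurj i
  rcases hf j with h | h
  · exact ⟨j, Or.inl (by rw [← h, w.symm_apply_apply])⟩
  · refine ⟨j, Or.inr ?_⟩
    have h2 : stdBasis n (f j) = -(w (stdBasis n j)) := by rw [h, neg_neg]
    rw [h2, map_neg, w.symm_apply_apply]

lemma signed_root {w : (Fin n → ℤ) ≃ₗ[ℤ] (Fin n → ℤ)} (hw : IsSigned w)
    {v : Fin n → ℤ} (hv : v ∈ PhiPos n) : w v ∈ PhiPos n ∪ -(PhiPos n) := by
  rcases hv with ⟨i, j, hij, rfl⟩ | ⟨i, j, hij, rfl⟩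
  · obtain ⟨a, ha⟩ := hw i
    obtain ⟨b, hb⟩ := hw j
    have hab : a ≠ b := fun h => hij.ne (signed_ne ha hb h)
    rw [map_sub]
    rcases ha with ha | ha <;> rcases hb with hb | hb <;> rw [ha, hb]
    · exact sub_mem_cases hab
    · rw [sub_neg_eq_add]; exact Or.inl (add_mem_pos a b)
    · have : -stdBasis n a - stdBasis n b ∈ -(PhiPos n) := neg_add_mem a b
      exact Or.inr this
    · have : -stdBasis n a - -stdBasis n b = stdBasis n b - stdBasis n a := by ring
      rw [this]
      exact sub_mem_cases hab.symm
  · obtain ⟨a, ha⟩ := hw i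
    obtain ⟨b, hb⟩ := hw j
    rw [map_add]
    rcases ha with ha | ha <;> rcases hb with hb | hb <;> rw [ha, hb]
    · exact Or.inl (add_mem_pos a b)
    · rcases eq_or_ne i j with rfl | hne
      · exfalso
        have : stdBasis n a = -stdBasis n b := by rw [← ha, ← hb]
        exact std_ne_neg a b this
      · have hab : a ≠ b := fun h => hne (signed_ne (Or.inl ha) (Or.inr hb) h)
        have : stdBasis n a + -stdBasis n b = stdBasis n a - stdBasis n b := by ring
        rw [this]
        exact sub_mem_cases hab
    · rcases eq_or_ne i j with rfl | hne
      · exfalso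
        have : stdBasis n b = -stdBasis n a := by rw [← ha, ← hb]
        exact std_ne_neg b a this
      · have hab : a ≠ b := fun h => hne (signed_ne (Or.inr ha) (Or.inl hb) h)
        have : -stdBasis n a + stdBasis n b = stdBasis n b - stdBasis n a := by ring
        rw [this]
        exact sub_mem_cases hab.symm
    · have : -stdBasis n a + -stdBasis n b = -stdBasis n a - stdBasis n b := by ring
      rw [this]
      exact Or.inr (neg_add_mem a b)

lemma mem_phiW {w : (Fin n → ℤ) ≃ₗ[ℤ] (Fin n → ℤ)} {v : Fin n → ℤ} :
    v ∈ PhiW w ↔ w.symm v ∈ -(PhiPos n) ∧ v ∈ PhiPos n := by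
  constructor
  · rintro ⟨⟨u, hu, rfl⟩, h2⟩
    exact ⟨by rw [w.symm_apply_apply]; exact hu, h2⟩
  · rintro ⟨h1, h2⟩
    exact ⟨⟨w.symm v, h1, w.apply_symm_apply v⟩, h2⟩

lemma phiW_closed {w : (Fin n → ℤ) ≃ₗ[ℤ] (Fin n → ℤ)} (hw : IsSigned w)
    {α β : Fin n → ℤ} (hα : α ∈ PhiW w) (hβ : β ∈ PhiW w)
    (hs : α + β ∈ PhiPos n) : α + β ∈ PhiW w := by
  rw [mem_phiW] at hα hβ ⊢
  refine ⟨?_, hs⟩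
  have h1 := Set.mem_neg.mp hα.1
  have h2 := Set.mem_neg.mp hβ.1
  have hroot := signed_root (signed_symm hw) hs
  rw [map_add] at hroot ⊢
  rcases hroot with h | h
  · exfalso
    have hsum := fnz_add (fnz_of_mem h1) (fnz_of_mem h2)
    refine fnz_neg_false (fnz_of_mem h) ?_
    have : -(w.symm α + w.symm β) = -w.symm α + -w.symm β := by ring
    rw [this]
    exact hsum
  · exact h

lemma phiW_coclosed {w : (Fin n → ℤ) ≃ₗ[ℤ] (Fin n → ℤ)} (hw : IsSigned w)
    {α β : Fin n → ℤ} (hα : α ∈ PhiPos n) (hβ : β ∈ PhiPos n)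
    (hs : α + β ∈ PhiW w) : α ∈ PhiW w ∨ β ∈ PhiW w := by
  by_contra hc
  push_neg at hc
  obtain ⟨h1, h2⟩ := hc
  have hα' : w.symm α ∈ PhiPos n := by
    rcases signed_root (signed_symm hw) hα with h | h
    · exact h
    · exact absurd (mem_phiW.mpr ⟨h, hα⟩) h1
  have hβ' : w.symm β ∈ PhiPos n := by
    rcases signed_root (signed_symm hw) hβ with h | h
    · exact h
    · exact absurd (mem_phiW.mpr ⟨h, hβ⟩) h2
  have hs' := (mem_phiW.mp hs).1
  rw [map_add] at hs'
  have := fnz_of_mem (Set.mem_neg.mp hs')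
  refine fnz_neg_false (fnz_add (fnz_of_mem hα') (fnz_of_mem hβ')) this

lemma permL_single (σ : Equiv.Perm (Fin n)) (i : Fin n) :
    permL σ (stdBasis n i) = stdBasis n (σ i) := by
  funext k
  show stdBasis n i (σ.symm k) = stdBasis n (σ i) k
  unfold stdBasis
  rw [Pi.single_apply, Pi.single_apply]
  simp [Equiv.symm_apply_eq]

lemma permL_symm_single (σ : Equiv.Perm (Fin n)) (i : Fin n) :
    (permL σ).symm (stdBasis n i) = stdBasis n (σ.symm i) := by
  funext k
  show stdBasis n i (σ k) = stdBasis n (σ.symm i) k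
  unfold stdBasis
  rw [Pi.single_apply, Pi.single_apply]
  simp [Equiv.apply_eq_iff_eq_symm_apply]

lemma permL_mem_phi1 (σ : Equiv.Perm (Fin n)) {v : Fin n → ℤ} (hv : v ∈ Phi1 n) :
    permL σ v ∈ Phi1 n := by
  obtain ⟨i, j, hij, rfl⟩ := hv
  rw [map_add, permL_single, permL_single]
  exact add_mem_phi1 _ _

lemma permL_symm_mem_phi1 (σ : Equiv.Perm (Fin n)) {v : Fin n → ℤ} (hv : v ∈ Phi1 n) :
    (permL σ).symm v ∈ Phi1 n := by
  obtain ⟨i, j, hij, rfl⟩ := hv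
  rw [map_add, permL_symm_single, permL_symm_single]
  exact add_mem_phi1 _ _

def Sv (v : Fin n → ℤ) : ℤ := ∑ k, v k

lemma Sv_std (i : Fin n) : Sv (stdBasis n i) = 1 := by
  simp [Sv, stdBasis]

lemma Sv_phi1 {v : Fin n → ℤ} (hv : v ∈ Phi1 n) : Sv v = 2 := by
  obtain ⟨i, j, hij, rfl⟩ := hv
  unfold Sv
  simp only [Pi.add_apply]
  rw [Finset.sum_add_distrib]
  have := Sv_std (n := n) i
  have := Sv_std (n := n) j
  unfold Sv at *
  omega

lemma Sv_phi0 {v : Fin n → ℤ} (hv : v ∈ Phi0 n) : Sv v = 0 := by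
  obtain ⟨i, j, hij, rfl⟩ := hv
  unfold Sv
  simp only [Pi.sub_apply]
  rw [Finset.sum_sub_distrib]
  have := Sv_std (n := n) i
  have := Sv_std (n := n) j
  unfold Sv at *
  omega

lemma Sv_pos {v : Fin n → ℤ} (hv : v ∈ PhiPos n) : Sv v = 0 ∨ Sv v = 2 := by
  rcases hv with h | h
  · exact Or.inl (Sv_phi0 h)
  · exact Or.inr (Sv_phi1 h)

lemma mem_phi0_of {v : Fin n → ℤ} (hv : v ∈ PhiPos n) (h : Sv v = 0) : v ∈ Phi0 n := by
  rcases hv with h1 | h1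
  · exact h1
  · rw [Sv_phi1 h1] at h; omega

lemma mem_phi1_of {v : Fin n → ℤ} (hv : v ∈ PhiPos n) (h : Sv v = 2) : v ∈ Phi1 n := by
  rcases hv with h1 | h1
  · rw [Sv_phi0 h1] at h; omega
  · exact h1

lemma Sv_add (u v : Fin n → ℤ) : Sv (u + v) = Sv u + Sv v := by
  simp [Sv, Finset.sum_add_distrib]

lemma Sv_permL (σ : Equiv.Perm (Fin n)) (v : Fin n → ℤ) : Sv (permL σ v) = Sv v := by
  show ∑ k, v (σ.symm k) = ∑ k, v k
  exact Equiv.sum_comp σ.symm v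

end Aux

theorem stmt8 (n : ℕ) (hn : 1 ≤ n) (w : (Fin n → ℤ) ≃ₗ[ℤ] (Fin n → ℤ)) (hw : IsSigned w)
    (η : Equiv.Perm (Fin n)) (hη : PhiW w ∩ Phi0 n = PhiW (permL η)) :
    ⇑(permL (Fin.revPerm * η⁻¹)) '' (PhiW w ∩ Phi1 n) ∈ Upsilon n := by
  set τ : Equiv.Perm (Fin n) := Fin.revPerm * η⁻¹ with hτdef
  refine ⟨?_, ?_, ?_⟩
  · -- ξ ⊆ Φ⁺
    rintro _ ⟨x, ⟨hxW, hx1⟩, rfl⟩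
    exact phi1_subset (permL_mem_phi1 τ hx1)
  · -- ideal condition
    rintro z ⟨⟨x', hx', γ, hγ, rfl⟩, hz2⟩
    obtain ⟨x, ⟨hxW, hx1⟩, rfl⟩ := hx'
    have hz2' : permL τ x + γ ∈ PhiPos n := hz2
    clear hz2
    -- sums
    have hSx : Sv (permL τ x) = 2 := by rw [Sv_permL]; exact Sv_phi1 hx1
    have hSz : Sv (permL τ x + γ) = 2 + Sv γ := by rw [Sv_add, hSx]
    have hγ0 : γ ∈ Phi0 n := by
      apply mem_phi0_of hγ
      rcases Sv_pos hγ with h | h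
      · exact h
      · exfalso
        rcases Sv_pos hz2' with h2 | h2 <;> omega
    have hz1 : permL τ x + γ ∈ Phi1 n := by
      apply mem_phi1_of hz2'
      rcases Sv_pos hγ with h | h <;> rcases Sv_pos hz2' with h2 | h2 <;> omega
    obtain ⟨i, j, hij, rfl⟩ := hγ0
    set p : Fin n := η i.rev with hp
    set q : Fin n := η j.rev with hq
    have hηp : η.symm p = i.rev := by rw [hp, Equiv.symm_apply_apply]
    have hηq : η.symm q = j.rev := by rw [hq, Equiv.symm_apply_apply]
    have hrev : j.rev < i.rev := by rwa [Fin.rev_lt_rev]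
    have hpq : p ≠ q := by
      intro h
      rw [hp, hq] at h
      exact absurd (η.injective h) hrev.ne'
    have hτp : τ p = i := by
      rw [hτdef, hp]
      show Fin.revPerm (η⁻¹ (η i.rev)) = i
      rw [Equiv.Perm.inv_def, Equiv.symm_apply_apply]
      simp [Fin.rev_rev]
    have hτq : τ q = j := by
      rw [hτdef, hq]
      show Fin.revPerm (η⁻¹ (η j.rev)) = j
      rw [Equiv.Perm.inv_def, Equiv.symm_apply_apply]
      simp [Fin.rev_rev]
    set y : Fin n → ℤ := x + (stdBasis n p - stdBasis n q) with hydef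
    have hyz : permL τ y = permL τ x + (stdBasis n i - stdBasis n j) := by
      rw [hydef, map_add, map_sub, permL_single, permL_single, hτp, hτq]
    have hy1 : y ∈ Phi1 n := by
      have := permL_symm_mem_phi1 τ hz1
      rwa [← hyz, (permL τ).symm_apply_apply] at this
    have hyW : y ∈ PhiW w := by
      rcases hpq.lt_or_gt with hlt | hlt
      · -- p < q : e_p - e_q ∈ Φ_w, use closedness
        have hroot : stdBasis n p - stdBasis n q ∈ PhiW (permL η) := by
          rw [mem_phiW]
          refine ⟨?_, Or.inl ⟨p, q, hlt, rfl⟩⟩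
          rw [map_sub, permL_symm_single, permL_symm_single, hηp, hηq]
          exact sub_mem_neg hrev
        rw [← hη] at hroot
        exact phiW_closed hw hxW hroot.1 (phi1_subset hy1)
      · -- q < p : use coclosedness
        have hx_eq : y + (stdBasis n q - stdBasis n p) = x := by rw [hydef]; ring
        have hco := phiW_coclosed hw (phi1_subset hy1)
          (Or.inl ⟨q, p, hlt, rfl⟩) (by rw [hx_eq]; exact hxW)
        rcases hco with h | h
        · exact h
        · exfalso
          have hmem : stdBasis n q - stdBasis n p ∈ PhiW (permL η) := by
            rw [← hη]; exact ⟨h, ⟨q, p, hlt, rfl⟩⟩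
          have h2 := (mem_phiW.mp hmem).1
          rw [map_sub, permL_symm_single, permL_symm_single, hηp, hηq] at h2
          have h3 : stdBasis n j.rev - stdBasis n i.rev ∈ PhiPos n :=
            Or.inl ⟨j.rev, i.rev, hrev, rfl⟩
          exact not_mem_neg h3 h2
    exact ⟨y, ⟨hyW, hy1⟩, hyz⟩
  · -- abelian condition
    rw [Set.eq_empty_iff_forall_notMem]
    rintro v ⟨hv1, hv2⟩
    obtain ⟨a, ha, b, hb, rfl⟩ := hv1
    obtain ⟨xa, ⟨_, ha1⟩, rfl⟩ := ha
    obtain ⟨xb, ⟨_, hb1⟩, rfl⟩ := hb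
    have hv2' : permL τ xa + permL τ xb ∈ PhiPos n := hv2
    clear hv2
    have hSa : Sv (permL τ xa) = 2 := by rw [Sv_permL]; exact Sv_phi1 ha1
    have hSb : Sv (permL τ xb) = 2 := by rw [Sv_permL]; exact Sv_phi1 hb1
    have := Sv_add (permL τ xa) (permL τ xb)
    rcases Sv_pos hv2' with h | h <;> omega
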